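/- Let p = 2m+1 be an odd integer and set k := (if 0 ≤ p then 1 else 0) - 1 ∈ ℤ. Then the function s ↦ s^k · Γ_ℂ(s-p) · cos(π(s-p)/2) tends to (-1)^m · π · (2π)^p · Γ*(-p) as s tends to 0 within the punctured neighborhood of 0 in ℂ (s^k denoting the integer power). -/

import Mathlib

open Filter Topology

/-- The complexified archimedean Euler factor `Γ_ℂ(s) = 2 (2π)^{-s} Γ(s)`. -/
noncomputable def GammaC (s : ℂ) : ℂ := 2 * (2 * (Real.pi : ℂ)) ^ (-s) * Complex.Gamma s

/-- The leading Taylor coefficient of the Gamma function at the integer `j`. -/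
def GammaStar (j : ℤ) : ℚ :=
  if 1 ≤ j then ((j - 1).toNat.factorial : ℚ)
  else (-1 : ℚ) ^ j / ((-j).toNat.factorial : ℚ)

lemma cos_int_mul_pi' (m : ℤ) : Complex.cos ((m : ℂ) * (Real.pi : ℂ)) = (-1) ^ m := by
  have h : Real.cos ((m : ℝ) * Real.pi) = (-1) ^ m := by
    simpa using Real.cos_int_mul_pi_sub 0 m
  calc Complex.cos ((m : ℂ) * (Real.pi : ℂ))
      = ((Real.cos ((m : ℝ) * Real.pi) : ℝ) : ℂ) := by
        rw [Complex.ofReal_cos]; push_cast; ring_nf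
    _ = (-1) ^ m := by rw [h]; push_cast; ring

lemma cos_shift (m : ℤ) (s : ℂ) :
    Complex.cos ((Real.pi : ℂ) * (s - ((2 * m + 1 : ℤ) : ℂ)) / 2)
      = (-1) ^ m * Complex.sin ((Real.pi : ℂ) * s / 2) := by
  have harg : (Real.pi : ℂ) * (s - ((2 * m + 1 : ℤ) : ℂ)) / 2
      = (Real.pi : ℂ) * s / 2 - ((m : ℂ) * (Real.pi : ℂ) + (Real.pi : ℂ) / 2) := by
    push_cast; ring
  rw [harg, Complex.cos_sub, Complex.cos_add_pi_div_two, Complex.sin_add_pi_div_two,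
    Complex.sin_int_mul_pi, cos_int_mul_pi']
  ring

lemma sin_shift (m : ℤ) (s : ℂ) :
    Complex.sin ((Real.pi : ℂ) * (s - ((2 * m + 1 : ℤ) : ℂ)) / 2)
      = -((-1) ^ m * Complex.cos ((Real.pi : ℂ) * s / 2)) := by
  have harg : (Real.pi : ℂ) * (s - ((2 * m + 1 : ℤ) : ℂ)) / 2
      = (Real.pi : ℂ) * s / 2 - ((m : ℂ) * (Real.pi : ℂ) + (Real.pi : ℂ) / 2) := by
    push_cast; ring
  rw [harg, Complex.sin_sub, Complex.cos_add_pi_div_two, Complex.sin_add_pi_div_two,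
    Complex.sin_int_mul_pi, cos_int_mul_pi']
  ring

lemma norm_int_lt_one {k : ℤ} (h : ‖(k : ℂ)‖ < 1) : k = 0 := by
  by_contra hk
  have h1 : (1 : ℝ) ≤ |(k : ℝ)| := by exact_mod_cast Int.one_le_abs hk
  rw [show ((k : ℂ)) = ((k : ℝ) : ℂ) by push_cast; rfl, Complex.norm_real,
    Real.norm_eq_abs] at h
  linarith

lemma tendsto_sin_div : Tendsto (fun s : ℂ => Complex.sin ((Real.pi : ℂ) * s / 2) / s)
    (𝓝[≠] (0 : ℂ)) (𝓝 ((Real.pi : ℂ) / 2)) := by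
  have hpi : ((Real.pi : ℂ)) ≠ 0 := Complex.ofReal_ne_zero.2 Real.pi_ne_zero
  have hd : HasDerivAt Complex.sin (Complex.cos 0) 0 := Complex.hasDerivAt_sin 0
  rw [hasDerivAt_iff_tendsto_slope, slope_fun_def_field] at hd
  have hd1 : Tendsto (fun z : ℂ => Complex.sin z / z) (𝓝[≠] (0 : ℂ)) (𝓝 1) := by
    simpa [Complex.sin_zero, Complex.cos_zero] using hd
  have hφ : Tendsto (fun s : ℂ => (Real.pi : ℂ) * s / 2) (𝓝[≠] (0 : ℂ)) (𝓝[≠] (0 : ℂ)) := by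
    rw [tendsto_nhdsWithin_iff]
    constructor
    · have : Tendsto (fun s : ℂ => (Real.pi : ℂ) * s / 2) (𝓝 0) (𝓝 ((Real.pi : ℂ) * 0 / 2)) :=
        (continuous_const.mul continuous_id |>.div_const 2).tendsto 0
      simpa using this.mono_left nhdsWithin_le_nhds
    · filter_upwards [self_mem_nhdsWithin] with s hs
      simp only [Set.mem_compl_iff, Set.mem_singleton_iff] at hs ⊢
      exact div_ne_zero (mul_ne_zero hpi hs) two_ne_zero
  have := (hd1.comp hφ).mul_const ((Real.pi : ℂ) / 2)
  rw [one_mul] at this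
  refine this.congr' ?_
  filter_upwards [self_mem_nhdsWithin] with s hs
  simp only [Set.mem_compl_iff, Set.mem_singleton_iff] at hs
  show Complex.sin ((Real.pi : ℂ) * s / 2) / ((Real.pi : ℂ) * s / 2) * ((Real.pi : ℂ) / 2)
      = Complex.sin ((Real.pi : ℂ) * s / 2) / s
  field_simp

/-- Leading coefficient at `s = 0` of `Γ_ℂ(s-p) cos(π(s-p)/2)` for `p = 2m+1` odd:
with `k = (if 0 ≤ p then 1 else 0) - 1`,
`s^k Γ_ℂ(s-p) cos(π(s-p)/2) → (-1)^m · π · (2π)^p · Γ*(-p)`. -/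
theorem tendsto_Lfactor_odd (p m : ℤ) (hp : p = 2 * m + 1) :
    Tendsto
      (fun s : ℂ =>
        s ^ ((if (0 : ℤ) ≤ p then (1 : ℤ) else 0) - 1) * GammaC (s - (p : ℂ)) *
          Complex.cos ((Real.pi : ℂ) * (s - (p : ℂ)) / 2))
      (𝓝[≠] (0 : ℂ))
      (𝓝 ((-1 : ℂ) ^ m * (Real.pi : ℂ) * (2 * (Real.pi : ℂ)) ^ p *
        ((GammaStar (-p) : ℚ) : ℂ))) := by
  subst hp
  have hpi : ((Real.pi : ℂ)) ≠ 0 := Complex.ofReal_ne_zero.2 Real.pi_ne_zero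
  have h2pi : (2 * (Real.pi : ℂ)) ≠ 0 := mul_ne_zero two_ne_zero hpi
  set c : ℂ := ((2 * m + 1 : ℤ) : ℂ) with hc
  by_cases hm : (0 : ℤ) ≤ 2 * m + 1
  · -- p ≥ 1 case
    rw [if_pos hm]
    set n : ℕ := (2 * m + 1).toNat with hn
    have hzn : ((n : ℤ)) = 2 * m + 1 := Int.toNat_of_nonneg hm
    have hnc : c = (n : ℂ) := by
      have := congrArg (fun x : ℤ => (x : ℂ)) hzn
      push_cast at this
      rw [hc]; push_cast; linear_combination -this
    have hfacne : ((n.factorial : ℂ)) ≠ 0 := by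
      exact_mod_cast Nat.factorial_ne_zero n
    have hGS : ((GammaStar (-(2 * m + 1)) : ℚ) : ℂ) = -1 / (n.factorial : ℂ) := by
      rw [GammaStar, if_neg (by omega)]
      have h2 : ((-1 : ℚ)) ^ (2 * m + 1 : ℤ) = -1 := by
        rw [zpow_add₀ (by norm_num : (-1 : ℚ) ≠ 0), zpow_mul]
        norm_num
      rw [show (-(-(2 * m + 1)) : ℤ) = 2 * m + 1 by ring, zpow_neg, h2]
      push_cast
      norm_num
      rfl
    have hGamne : Complex.Gamma (1 + c - 0) ≠ 0 := by
      rw [sub_zero, hnc]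
      apply Complex.Gamma_ne_zero_of_re_pos
      rw [show (1 : ℂ) + (n : ℂ) = (((1 + n : ℕ) : ℝ) : ℂ) by push_cast; ring,
        Complex.ofReal_re]
      positivity
    have hreg : DifferentiableAt ℂ Complex.Gamma (1 + c - 0) := by
      refine Complex.differentiableAt_Gamma _ fun j => ?_
      rw [sub_zero, hnc]
      intro h
      have h2 : ((1 + n + j : ℕ) : ℂ) = 0 := by push_cast; linear_combination h
      have h3 : (1 + n + j : ℕ) = 0 := by exact_mod_cast h2
      omega
    have hGamval : Complex.Gamma (1 + c - 0) = (n.factorial : ℂ) := by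
      rw [sub_zero, hnc, add_comm]
      exact_mod_cast Complex.Gamma_nat_eq_factorial n
    have hcos0 : Complex.cos ((Real.pi : ℂ) * 0 / 2) = 1 := by
      norm_num
    have hcontg : ContinuousAt (fun s : ℂ =>
        -((-1 : ℂ) ^ m) * (Real.pi : ℂ) * (2 * (Real.pi : ℂ)) ^ (c - s) /
          (Complex.cos ((Real.pi : ℂ) * s / 2) * Complex.Gamma (1 + c - s))) 0 := by
      apply ContinuousAt.div
      · exact continuousAt_const.mul
          ((continuousAt_const.sub continuousAt_id).const_cpow (Or.inl h2pi))
      · refine ContinuousAt.mul ?_ ?_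
        · exact ContinuousAt.comp (g := Complex.cos) (f := fun s : ℂ => (Real.pi : ℂ) * s / 2)
            Complex.continuous_cos.continuousAt (by fun_prop)
        · exact ContinuousAt.comp (g := Complex.Gamma) (f := fun s : ℂ => 1 + c - s)
            hreg.continuousAt (by fun_prop)
      · rw [hcos0, one_mul]
        exact hGamne
    have hg : Tendsto (fun s : ℂ =>
        -((-1 : ℂ) ^ m) * (Real.pi : ℂ) * (2 * (Real.pi : ℂ)) ^ (c - s) /
          (Complex.cos ((Real.pi : ℂ) * s / 2) * Complex.Gamma (1 + c - s))) (𝓝[≠] (0 : ℂ))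
        (𝓝 (-((-1 : ℂ) ^ m) * (Real.pi : ℂ) * (2 * (Real.pi : ℂ)) ^ (c - 0) /
          (Complex.cos ((Real.pi : ℂ) * 0 / 2) * Complex.Gamma (1 + c - 0)))) :=
      hcontg.tendsto.mono_left nhdsWithin_le_nhds
    have hval : (-1 : ℂ) ^ m * (Real.pi : ℂ) * (2 * (Real.pi : ℂ)) ^ (2 * m + 1 : ℤ) *
          ((GammaStar (-(2 * m + 1)) : ℚ) : ℂ)
        = -((-1 : ℂ) ^ m) * (Real.pi : ℂ) * (2 * (Real.pi : ℂ)) ^ (c - 0) /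
          (Complex.cos ((Real.pi : ℂ) * 0 / 2) * Complex.Gamma (1 + c - 0)) := by
      rw [hGS, hGamval, hcos0, one_mul, sub_zero, hc, Complex.cpow_intCast]
      field_simp
    have hev : ∀ᶠ s in 𝓝[≠] (0 : ℂ),
        (fun s : ℂ => -((-1 : ℂ) ^ m) * (Real.pi : ℂ) * (2 * (Real.pi : ℂ)) ^ (c - s) /
          (Complex.cos ((Real.pi : ℂ) * s / 2) * Complex.Gamma (1 + c - s))) s
        = s ^ ((1 : ℤ) - 1) * GammaC (s - c) *
            Complex.cos ((Real.pi : ℂ) * (s - c) / 2) := by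
      have hball : ∀ᶠ s : ℂ in 𝓝 0, ‖s‖ < 1 := by
        filter_upwards [Metric.ball_mem_nhds (0 : ℂ) one_pos] with s hs
        simpa [Complex.dist_eq] using hs
      filter_upwards [hball.filter_mono nhdsWithin_le_nhds, self_mem_nhdsWithin] with s hsn hs0
      simp only [Set.mem_compl_iff, Set.mem_singleton_iff] at hs0
      have hS : Complex.sin ((Real.pi : ℂ) * s / 2) ≠ 0 := by
        rw [Ne, Complex.sin_eq_zero_iff]
        rintro ⟨k, hk⟩
        have h1 : (Real.pi : ℂ) * s = (Real.pi : ℂ) * ((2 * k : ℤ) : ℂ) := by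
          push_cast
          linear_combination 2 * hk
        have h2 : s = ((2 * k : ℤ) : ℂ) := mul_left_cancel₀ hpi h1
        rw [h2] at hsn hs0
        have := norm_int_lt_one hsn
        simp only [this] at hs0
        exact hs0 (by norm_num)
      have hC : Complex.cos ((Real.pi : ℂ) * s / 2) ≠ 0 := by
        rw [Ne, Complex.cos_eq_zero_iff]
        rintro ⟨k, hk⟩
        have h1 : (Real.pi : ℂ) * s = (Real.pi : ℂ) * ((2 * k + 1 : ℤ) : ℂ) := by
          push_cast
          linear_combination 2 * hk
        have h2 : s = ((2 * k + 1 : ℤ) : ℂ) := mul_left_cancel₀ hpi h1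
        rw [h2] at hsn
        have := norm_int_lt_one hsn
        omega
      have hG : Complex.Gamma (1 + c - s) ≠ 0 := by
        refine Complex.Gamma_ne_zero fun j => ?_
        rw [hnc]
        intro h
        have h2 : s = (((1 + n + j : ℕ) : ℤ) : ℂ) := by push_cast; linear_combination -h
        rw [h2] at hsn
        have := norm_int_lt_one hsn
        omega
      have hcs := cos_shift m s
      have hss := sin_shift m s
      rw [← hc] at hcs hss
      have hsq : ((-1 : ℂ)) ^ m * (-1) ^ m = 1 := by
        rw [← zpow_add₀ (by norm_num : (-1 : ℂ) ≠ 0), show m + m = 2 * m by ring, zpow_mul]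
        norm_num
      have hsf : Complex.sin ((Real.pi : ℂ) * (s - c)) =
          -(2 * Complex.sin ((Real.pi : ℂ) * s / 2) * Complex.cos ((Real.pi : ℂ) * s / 2)) := by
        rw [show (Real.pi : ℂ) * (s - c) = 2 * ((Real.pi : ℂ) * (s - c) / 2) by ring,
          Complex.sin_two_mul, hss, hcs]
        linear_combination (-2 * Complex.cos ((Real.pi : ℂ) * s / 2) *
          Complex.sin ((Real.pi : ℂ) * s / 2)) * hsq
      have hsfne : Complex.sin ((Real.pi : ℂ) * (s - c)) ≠ 0 := by
        rw [hsf]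
        exact neg_ne_zero.2 (mul_ne_zero (mul_ne_zero two_ne_zero hS) hC)
      have hrefl := Complex.Gamma_mul_Gamma_one_sub (s - c)
      rw [show (1 : ℂ) - (s - c) = 1 + c - s by ring, eq_div_iff hsfne, hsf] at hrefl
      show _ = s ^ ((1 : ℤ) - 1) * GammaC (s - c) * Complex.cos ((Real.pi : ℂ) * (s - c) / 2)
      rw [show ((1 : ℤ) - 1) = 0 by ring, zpow_zero, one_mul, hcs]
      unfold GammaC
      rw [neg_sub]
      field_simp
      linear_combination hrefl
    rw [hval]
    exact Tendsto.congr' hev hg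
  · -- p ≤ -1 case
    rw [if_neg hm]
    set n : ℕ := (-(2 * m + 1) - 1).toNat with hn
    have hzn : ((n : ℤ)) = -(2 * m + 1) - 1 := Int.toNat_of_nonneg (by omega)
    have hnc : c = -((n : ℂ) + 1) := by
      have := congrArg (fun x : ℤ => (x : ℂ)) hzn
      push_cast at this
      rw [hc]
      push_cast
      linear_combination this
    have hGam : Complex.Gamma (-c) = (n.factorial : ℂ) := by
      rw [hnc, neg_neg]
      exact_mod_cast Complex.Gamma_nat_eq_factorial n
    have hGS : ((GammaStar (-(2 * m + 1)) : ℚ) : ℂ) = (n.factorial : ℂ) := by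
      rw [GammaStar, if_pos (by omega)]
      rw [hn]
      push_cast
      rfl
    have hGC : Tendsto (fun s : ℂ => (-1 : ℂ) ^ m * GammaC (s - c)) (𝓝[≠] (0 : ℂ))
        (𝓝 ((-1 : ℂ) ^ m * GammaC ((0 : ℂ) - c))) := by
      have hreg : DifferentiableAt ℂ Complex.Gamma ((0 : ℂ) - c) := by
        refine Complex.differentiableAt_Gamma _ fun j => ?_
        rw [hnc]
        intro h
        have h2 : ((n + 1 + j : ℕ) : ℂ) = 0 := by push_cast; linear_combination h
        have h3 : (n + 1 + j : ℕ) = 0 := by exact_mod_cast h2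
        omega
      have hcont : ContinuousAt (fun s : ℂ => (-1 : ℂ) ^ m * GammaC (s - c)) 0 := by
        unfold GammaC
        refine ContinuousAt.mul continuousAt_const (ContinuousAt.mul ?_ ?_)
        · exact ContinuousAt.mul continuousAt_const
            (((continuousAt_id.sub continuousAt_const).neg).const_cpow (Or.inl h2pi))
        · have h1 : ContinuousAt (fun s : ℂ => s - c) 0 :=
            continuousAt_id.sub continuousAt_const
          exact ContinuousAt.comp (g := Complex.Gamma) (f := fun s : ℂ => s - c)
            hreg.continuousAt h1
      exact hcont.tendsto.mono_left nhdsWithin_le_nhds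
    have key := tendsto_sin_div.mul hGC
    have heq : (fun s : ℂ =>
        s ^ ((0 : ℤ) - 1) * GammaC (s - c) *
          Complex.cos ((Real.pi : ℂ) * (s - c) / 2))
        = fun s : ℂ => (Complex.sin ((Real.pi : ℂ) * s / 2) / s) *
            ((-1 : ℂ) ^ m * GammaC (s - c)) := by
      funext s
      rw [hc, cos_shift]
      rw [show ((0 : ℤ) - 1) = (-1 : ℤ) by ring, zpow_neg_one, div_eq_mul_inv]
      ring
    have hval : (-1 : ℂ) ^ m * (Real.pi : ℂ) * (2 * (Real.pi : ℂ)) ^ (2 * m + 1 : ℤ) *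
          ((GammaStar (-(2 * m + 1)) : ℚ) : ℂ)
        = (Real.pi : ℂ) / 2 * ((-1 : ℂ) ^ m * GammaC ((0 : ℂ) - c)) := by
      rw [hGS]
      unfold GammaC
      rw [zero_sub, neg_neg, hGam, hc, Complex.cpow_intCast]
      ring
    rw [heq, hval]
    exact key
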